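/- Let Σ_A be an m×m symmetric positive semidefinite matrix and s ∈ ℝ^m a nonnegative vector. The 2m×2m block matrix [[Σ_A, Σ_A − diag(s)], [Σ_A − diag(s), Σ_A]] is positive semidefinite if and only if the matrix 2Σ_A − diag(s) is positive semidefinite (together with diag(s) ⪰ 0). -/

import Mathlib

open Matrix

lemma quad_block {m : ℕ} (A B C D : Matrix (Fin m) (Fin m) ℝ) (u v : Fin m → ℝ) :
    Sum.elim u v ⬝ᵥ (fromBlocks A B C D *ᵥ Sum.elim u v)
      = u ⬝ᵥ (A *ᵥ u) + u ⬝ᵥ (B *ᵥ v) + v ⬝ᵥ (C *ᵥ u) + v ⬝ᵥ (D *ᵥ v) := by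
  rw [fromBlocks_mulVec, sumElim_dotProduct_sumElim]
  simp [dotProduct_add]
  ring

/-- The knockoff covariance block matrix `[[Σ_A, Σ_A − diag s], [Σ_A − diag s, Σ_A]]`
is positive semidefinite iff `diag s ⪰ 0` and `2 Σ_A − diag s ⪰ 0`. -/
theorem knockoff_block_psd_iff {m : ℕ}
    (SA : Matrix (Fin m) (Fin m) ℝ) (s : Fin m → ℝ)
    (hSA : SA.PosSemidef) (hs : ∀ i, 0 ≤ s i) :
    (Matrix.fromBlocks SA (SA - Matrix.diagonal s)
        (SA - Matrix.diagonal s) SA).PosSemidef ↔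
      ((Matrix.diagonal s).PosSemidef ∧
        ((2 : ℝ) • SA - Matrix.diagonal s).PosSemidef) := by
  set D := Matrix.diagonal s with hD
  have hDh : D.IsHermitian := isHermitian_diagonal s
  have hBh : (SA - D).IsHermitian := hSA.1.sub hDh
  have hMh : ((2 : ℝ) • SA - D).IsHermitian := by
    unfold Matrix.IsHermitian
    rw [conjTranspose_sub, conjTranspose_smul, hSA.1.eq, hDh.eq, star_trivial]
  have hsym : ∀ u v : Fin m → ℝ, u ⬝ᵥ (SA *ᵥ v) = v ⬝ᵥ (SA *ᵥ u) := by
    intro u v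
    rw [dotProduct_mulVec, ← mulVec_transpose,
      show SAᵀ = SA from (conjTranspose_eq_transpose_of_trivial SA) ▸ hSA.1, dotProduct_comm]
  have hsymD : ∀ u v : Fin m → ℝ, u ⬝ᵥ (D *ᵥ v) = v ⬝ᵥ (D *ᵥ u) := by
    intro u v
    rw [dotProduct_mulVec, ← mulVec_transpose,
      show Dᵀ = D from (conjTranspose_eq_transpose_of_trivial D) ▸ hDh, dotProduct_comm]
  constructor
  · intro h
    refine ⟨PosSemidef.diagonal (fun i => hs i), .of_dotProduct_mulVec_nonneg hMh fun x => ?_⟩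
    have hpos := h.dotProduct_mulVec_nonneg (Sum.elim x x)
    rw [show star (Sum.elim x x) = Sum.elim x x from rfl, quad_block] at hpos
    rw [show star x = x from rfl]
    simp only [sub_mulVec, dotProduct_sub, smul_mulVec, dotProduct_smul,
      smul_eq_mul] at hpos ⊢
    nlinarith [hpos]
  · rintro ⟨hDp, hM⟩
    refine .of_dotProduct_mulVec_nonneg (isHermitian_fromBlocks_iff.2 ⟨hSA.1, hBh.eq, hBh.eq, hSA.1⟩) fun y => ?_
    have hy : y = Sum.elim (y ∘ Sum.inl) (y ∘ Sum.inr) := by ext (i|i) <;> rfl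
    set u := y ∘ Sum.inl
    set v := y ∘ Sum.inr
    rw [show star y = y from rfl, hy, quad_block]
    have h1 := hM.dotProduct_mulVec_nonneg (u + v)
    have h2 := hDp.dotProduct_mulVec_nonneg (u - v)
    rw [show star (u+v) = u+v from rfl] at h1
    rw [show star (u-v) = u-v from rfl] at h2
    simp only [sub_mulVec, mulVec_add, mulVec_sub, dotProduct_add, dotProduct_sub,
      add_dotProduct, sub_dotProduct, smul_mulVec, dotProduct_smul,
      smul_eq_mul] at h1 h2 ⊢
    nlinarith [h1, h2, hsym u v, hsymD u v]
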